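/- The bijection P from 231-avoiding to 132-avoiding permutations preserves the up-down word: for every 231-avoiding π, the up-down words of π and P(π) coincide. In particular P preserves the descent set. -/

import Mathlib

/-- Stack sorting with fuel (fuel = length always suffices). -/
def stackSortAux : ℕ → List ℕ → List ℕ
  | 0, _ => []
  | _ + 1, [] => []
  | fuel + 1, x :: xs =>
    let l := x :: xs
    let m := l.foldr max 0
    stackSortAux fuel (l.takeWhile (· ≠ m)) ++
      stackSortAux fuel ((l.dropWhile (· ≠ m)).tail) ++ [m]

/-- The stack sorting operator `S`: `S(ε) = ε` and `S(α n β) = S(α) S(β) n`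
where `n` is the maximum element. -/
def stackSort (l : List ℕ) : List ℕ := stackSortAux l.length l

/-- `σ` avoids the pattern 231. -/
def Avoids231 (σ : List ℕ) : Prop :=
  ¬ ∃ i j k, i < j ∧ j < k ∧ k < σ.length ∧
      σ.getD k 0 < σ.getD i 0 ∧ σ.getD i 0 < σ.getD j 0

/-- `σ` avoids the pattern 132. -/
def Avoids132 (σ : List ℕ) : Prop :=
  ¬ ∃ i j k, i < j ∧ j < k ∧ k < σ.length ∧
      σ.getD i 0 < σ.getD k 0 ∧ σ.getD k 0 < σ.getD j 0

/-- Binary trees with natural number labels. -/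
inductive BTree where
  | leaf : BTree
  | node : BTree → ℕ → BTree → BTree

def BTree.inorder : BTree → List ℕ
  | .leaf => []
  | .node l n r => l.inorder ++ [n] ++ r.inorder

def BTree.postorder : BTree → List ℕ
  | .leaf => []
  | .node l n r => l.postorder ++ r.postorder ++ [n]

/-- A tree is decreasing when labels strictly decrease from root to leaves. -/
def BTree.Decreasing : BTree → Prop
  | .leaf => True
  | .node l n r =>
      l.Decreasing ∧ r.Decreasing ∧
      (∀ x ∈ l.inorder, x < n) ∧ (∀ x ∈ r.inorder, x < n)

/-- The underlying unlabeled shape of a tree (labels replaced by `0`). -/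
def BTree.shape : BTree → BTree
  | .leaf => .leaf
  | .node l _ r => .node l.shape 0 r.shape

def BTree.map (f : ℕ → ℕ) : BTree → BTree
  | .leaf => .leaf
  | .node l n r => .node (l.map f) (f n) (r.map f)

/-- Labels on the rightmost branch from the root. -/
def BTree.rightBranch : BTree → List ℕ
  | .leaf => []
  | .node _ n r => n :: r.rightBranch

/-- Labels on the leftmost branch from the root. -/
def BTree.leftBranch : BTree → List ℕ
  | .leaf => []
  | .node l n _ => n :: l.leftBranch

def TinAux : ℕ → List ℕ → BTree
  | 0, _ => .leaf
  | _ + 1, [] => .leaf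
  | fuel + 1, x :: xs =>
    let l := x :: xs
    let m := l.foldr max 0
    .node (TinAux fuel (l.takeWhile (· ≠ m))) m
          (TinAux fuel ((l.dropWhile (· ≠ m)).tail))

/-- The decreasing binary tree whose in-order reading is `l`. -/
def Tin (l : List ℕ) : BTree := TinAux l.length l

def PpermAux : ℕ → List ℕ → List ℕ
  | 0, _ => []
  | _ + 1, [] => []
  | fuel + 1, x :: xs =>
    let l := x :: xs
    let m := l.foldr max 0
    let α := l.takeWhile (· ≠ m)
    let β := (l.dropWhile (· ≠ m)).tail
    (PpermAux fuel α).map (· + β.length) ++ [m] ++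
      PpermAux fuel (β.map (· - α.length))

/-- The bijection `P` from 231-avoiding to 132-avoiding permutations,
`P(ε) = ε` and `P(α ⊕ (1 ⊖ β)) = (P(α) ⊕ 1) ⊖ P(β)`. -/
def Pperm (l : List ℕ) : List ℕ := PpermAux l.length l

/-- Direct sum of permutations: `α ⊕ β`. -/
def osum (α β : List ℕ) : List ℕ := α ++ β.map (· + α.length)

/-- Skew sum of permutations: `α ⊖ β`. -/
def ossum (α β : List ℕ) : List ℕ := α.map (· + β.length) ++ β

def lrP : ℕ → List ℕ × List ℕ
  | 0 => ([], [])
  | m + 1 => (ossum [1] (lrP m).2, osum (lrP m).1 [1])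

/-- `λ_n`: `λ_{m+1} = 1 ⊖ ρ_m`. -/
def lamP (n : ℕ) : List ℕ := (lrP n).1

/-- `ρ_n`: `ρ_{m+1} = λ_m ⊕ 1`. -/
def rhoP (n : ℕ) : List ℕ := (lrP n).2

/-- `s` and `p` are order isomorphic lists. -/
def OrderIsoList (s p : List ℕ) : Prop :=
  s.length = p.length ∧
  ∀ i j, i < s.length → j < s.length →
    (s.getD i 0 < s.getD j 0 ↔ p.getD i 0 < p.getD j 0)

/-- `σ` contains the pattern `π`. -/
def Contains (σ π : List ℕ) : Prop :=
  ∃ s : List ℕ, s.Sublist σ ∧ OrderIsoList s π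

/-- The up-down word of a permutation (`true` = ascent `u`, `false` = descent `d`). -/
def updown (l : List ℕ) : List Bool :=
  (l.zip l.tail).map (fun p => decide (p.1 < p.2))

/-- No value larger than `max x y` occurs (strictly) between `x` and `y` in `l`. -/
def NoLargerBetween (l : List ℕ) (x y : ℕ) : Prop :=
  ∀ i j k, i < j → j < k → k < l.length →
    ((l.getD i 0 = x ∧ l.getD k 0 = y) ∨ (l.getD i 0 = y ∧ l.getD k 0 = x)) →
    l.getD j 0 ≤ max x y

/-- The basic operators: stack sorting `S` and reversal `R`. -/
inductive SOp where
  | s : SOp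
  | r : SOp

def applyOp : SOp → List ℕ → List ℕ
  | .s => stackSort
  | .r => List.reverse

/-- A composition of operators from `{S, R}`. -/
def applyOps (ops : List SOp) : List ℕ → List ℕ :=
  ops.foldr (fun op f => applyOp op ∘ f) id

/-- `i` is the position of a left-to-right maximum of `l`. -/
def LRmaxPos (l : List ℕ) (i : ℕ) : Prop :=
  i < l.length ∧ ∀ j, j < i → l.getD j 0 < l.getD i 0

/-- `i` is the position of a right-to-left maximum of `l`. -/
def RLmaxPos (l : List ℕ) (i : ℕ) : Prop :=
  i < l.length ∧ ∀ j, i < j → j < l.length → l.getD j 0 < l.getD i 0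

/-- The reverse Zeilberger statistic: the largest `k` such that
`(n-k+1) … (n-1) n` is a subword of `l`, where `n = l.length`. -/
noncomputable def Rzeil (l : List ℕ) : ℕ :=
  sSup {k | (List.range' (l.length - k + 1) k).Sublist l}

section PpermProof

theorem foldr_max_mem (l : List ℕ) (h : l ≠ []) : l.foldr max 0 ∈ l := by
  induction l with
  | nil => simp at h
  | cons x xs ih =>
    simp only [List.foldr_cons]
    rcases eq_or_ne xs [] with rfl | hxs
    · simp
    · rcases Nat.le_total x (xs.foldr max 0) with h1 | h1
      · simp [max_eq_right h1, ih hxs]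
      · simp [max_eq_left h1]

theorem le_foldr_max (l : List ℕ) : ∀ x ∈ l, x ≤ l.foldr max 0 := by
  induction l with
  | nil => simp
  | cons y ys ih =>
    intro x hx
    rcases List.mem_cons.1 hx with rfl | hx
    · exact le_max_left _ _
    · exact le_trans (ih x hx) (le_max_right _ _)

theorem decomp (l : List ℕ) (h : l ≠ []) :
    l = l.takeWhile (· ≠ l.foldr max 0) ++ l.foldr max 0 :: (l.dropWhile (· ≠ l.foldr max 0)).tail := by
  set m := l.foldr max 0 with hm
  have hmem : m ∈ l := foldr_max_mem l h
  have hne : l.dropWhile (· ≠ m) ≠ [] := by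
    intro hc
    have := List.dropWhile_eq_nil_iff.1 hc m hmem
    simp at this
  have hhead : (l.dropWhile (· ≠ m)).head hne = m := by
    have := List.head_dropWhile_not (· ≠ m) hne
    simpa using this
  have hdw : l.dropWhile (· ≠ m) = m :: (l.dropWhile (· ≠ m)).tail := by
    have h2 := List.cons_head_tail hne
    rw [hhead] at h2
    exact h2.symm
  conv_lhs => rw [← List.takeWhile_append_dropWhile (p := (· ≠ m)) (l := l), hdw]

theorem updown_cons_cons (a b : ℕ) (t : List ℕ) :
    updown (a :: b :: t) = decide (a < b) :: updown (b :: t) := rfl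

theorem updown_append (xs : List ℕ) (y : ℕ) (ys : List ℕ) :
    updown (xs ++ y :: ys) = updown (xs ++ [y]) ++ updown (y :: ys) := by
  induction xs with
  | nil => simp [updown]
  | cons x xs ih =>
    cases xs with
    | nil => simp [updown_cons_cons, updown]
    | cons x' xs' =>
      simp only [List.cons_append] at ih ⊢
      rw [updown_cons_cons, updown_cons_cons, ih]
      simp

theorem updown_concat (xs : List ℕ) (y : ℕ) (h : xs ≠ []) :
    updown (xs ++ [y]) = updown xs ++ [decide (xs.getLast h < y)] := by
  induction xs with
  | nil => simp at h
  | cons x xs ih =>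
    cases xs with
    | nil => simp [updown, List.getLast]; rfl
    | cons x' xs' =>
      have ih' := ih (by simp)
      simp only [List.cons_append] at ih' ⊢
      rw [updown_cons_cons, updown_cons_cons, ih']
      simp [List.getLast_cons]

theorem updown_cons (y : ℕ) (ys : List ℕ) (h : ys ≠ []) :
    updown (y :: ys) = decide (y < ys.head h) :: updown ys := by
  cases ys with
  | nil => simp at h
  | cons z t => rfl

theorem updown_map (f : ℕ → ℕ) (l : List ℕ)
    (h : ∀ x ∈ l, ∀ y ∈ l, (f x < f y ↔ x < y)) :
    updown (l.map f) = updown l := by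
  induction l with
  | nil => rfl
  | cons x xs ih =>
    cases xs with
    | nil => rfl
    | cons x' xs' =>
      simp only [List.map_cons] at *
      rw [updown_cons_cons, updown_cons_cons, ih]
      · congr 1
        simp only [decide_eq_decide]
        exact h x (by simp) x' (by simp)
      · intro a ha b hb
        exact h a (List.mem_cons_of_mem _ ha) b (List.mem_cons_of_mem _ hb)

theorem updown_length (l : List ℕ) : (updown l).length = l.length - 1 := by
  simp [updown, List.length_zip, List.length_tail]

theorem updown_sandwich {A α B β : List ℕ} {m : ℕ}
    (hlA : A.length = α.length) (hlB : B.length = β.length)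
    (hA : updown A = updown α) (hB : updown B = updown β)
    (hAm : ∀ x ∈ A, x < m) (hαm : ∀ x ∈ α, x < m)
    (hBm : ∀ x ∈ B, x < m) (hβm : ∀ x ∈ β, x < m) :
    updown (A ++ m :: B) = updown (α ++ m :: β) := by
  rw [updown_append A m B, updown_append α m β]
  congr 1
  · rcases eq_or_ne A [] with rfl | hAne
    · have : α = [] := List.length_eq_zero_iff.1 (by simpa using hlA.symm)
      subst this; rfl
    · have hαne : α ≠ [] := by
        intro hc; rw [hc] at hlA; exact hAne (List.length_eq_zero_iff.1 (by simpa using hlA))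
      rw [updown_concat A m hAne, updown_concat α m hαne, hA]
      congr 2
      have h1 : A.getLast hAne < m := hAm _ (List.getLast_mem hAne)
      have h2 : α.getLast hαne < m := hαm _ (List.getLast_mem hαne)
      simp [h1, h2]
  · rcases eq_or_ne B [] with rfl | hBne
    · have : β = [] := List.length_eq_zero_iff.1 (by simpa using hlB.symm)
      subst this; rfl
    · have hβne : β ≠ [] := by
        intro hc; rw [hc] at hlB; exact hBne (List.length_eq_zero_iff.1 (by simpa using hlB))
      rw [updown_cons m B hBne, updown_cons m β hβne, hB]
      congr 2
      have h1 : B.head hBne < m := hBm _ (List.head_mem hBne)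
      have h2 : β.head hβne < m := hβm _ (List.head_mem hβne)
      simp [Nat.not_lt.2 (le_of_lt h1), Nat.not_lt.2 (le_of_lt h2)]

theorem updown_getD (l : List ℕ) (i : ℕ) (h : i + 1 < l.length) :
    (updown l).getD i false = decide (l.getD i 0 < l.getD (i + 1) 0) := by
  have hlt : i < (updown l).length := by rw [updown_length]; omega
  rw [List.getD_eq_getElem _ _ hlt, List.getD_eq_getElem _ _ (by omega),
    List.getD_eq_getElem _ _ h]
  simp only [updown, List.getElem_map, List.getElem_zip, List.getElem_tail]

theorem ppermAux_fuel : ∀ f1 : ℕ, ∀ f2 : ℕ, ∀ l : List ℕ, l.length ≤ f1 → l.length ≤ f2 →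
    PpermAux f1 l = PpermAux f2 l := by
  intro f1
  induction f1 with
  | zero =>
    intro f2 l h1 _
    have : l = [] := List.length_eq_zero_iff.1 (by omega)
    subst this
    cases f2 <;> rfl
  | succ g1 ih =>
    intro f2 l h1 h2
    rcases l with _ | ⟨x, xs⟩
    · cases f2 <;> rfl
    · rcases f2 with _ | g2
      · simp at h2
      · have hd := decomp (x :: xs) (by simp)
        have hlen := congrArg List.length hd
        simp only [List.length_append, List.length_cons] at hlen
        simp only [List.length_cons] at h1 h2
        simp only [PpermAux]
        have hta : ((x :: xs).takeWhile (· ≠ (x :: xs).foldr max 0)).length ≤ g1 := by omega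
        have htb : (((x :: xs).dropWhile (· ≠ (x :: xs).foldr max 0)).tail.map
            (· - ((x :: xs).takeWhile (· ≠ (x :: xs).foldr max 0)).length)).length ≤ g1 := by
          simp only [List.length_map]; omega
        have hta2 : ((x :: xs).takeWhile (· ≠ (x :: xs).foldr max 0)).length ≤ g2 := by omega
        have htb2 : (((x :: xs).dropWhile (· ≠ (x :: xs).foldr max 0)).tail.map
            (· - ((x :: xs).takeWhile (· ≠ (x :: xs).foldr max 0)).length)).length ≤ g2 := by
          simp only [List.length_map]; omega
        rw [ih g2 _ hta hta2, ih g2 _ htb htb2]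

theorem ppermAux_succ (fuel x : ℕ) (xs : List ℕ) :
    PpermAux (fuel + 1) (x :: xs) =
      (PpermAux fuel ((x :: xs).takeWhile (· ≠ (x :: xs).foldr max 0))).map
        (· + ((x :: xs).dropWhile (· ≠ (x :: xs).foldr max 0)).tail.length) ++
      [(x :: xs).foldr max 0] ++
      PpermAux fuel (((x :: xs).dropWhile (· ≠ (x :: xs).foldr max 0)).tail.map
        (· - ((x :: xs).takeWhile (· ≠ (x :: xs).foldr max 0)).length)) := rfl

theorem pperm_unfold (l : List ℕ) (h : l ≠ []) :
    Pperm l = (Pperm (l.takeWhile (· ≠ l.foldr max 0))).map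
        (· + ((l.dropWhile (· ≠ l.foldr max 0)).tail).length) ++
      l.foldr max 0 ::
      Pperm (((l.dropWhile (· ≠ l.foldr max 0)).tail).map
        (· - (l.takeWhile (· ≠ l.foldr max 0)).length)) := by
  rcases l with _ | ⟨x, xs⟩
  · simp at h
  · have hd := decomp (x :: xs) (by simp)
    have hlen := congrArg List.length hd
    simp only [List.length_append, List.length_cons] at hlen
    show PpermAux (x :: xs).length (x :: xs) = _
    have hL : (x :: xs).length = xs.length + 1 := rfl
    rw [hL, ppermAux_succ]
    rw [ppermAux_fuel xs.length
      (((x :: xs).takeWhile (· ≠ (x :: xs).foldr max 0)).length) _ (by omega) (le_refl _)]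
    rw [ppermAux_fuel xs.length
      ((((x :: xs).dropWhile (· ≠ (x :: xs).foldr max 0)).tail.map
        (· - ((x :: xs).takeWhile (· ≠ (x :: xs).foldr max 0)).length)).length) _
      (by simp only [List.length_map]; omega) (le_refl _)]
    simp only [Pperm, List.append_assoc, List.singleton_append]

theorem pperm_main : ∀ n : ℕ, ∀ l : List ℕ, l.length = n → l.Perm (List.range' 1 n) →
    Avoids231 l →
    (Pperm l).Perm (List.range' 1 n) ∧ updown (Pperm l) = updown l := by
  intro n
  induction n using Nat.strong_induction_on with
  | _ n IH =>
  intro l hlen hperm havoid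
  rcases eq_or_ne l [] with rfl | hlne
  · simp at hlen
    subst hlen
    exact ⟨by simp [Pperm, PpermAux], rfl⟩
  obtain ⟨m, hmdef⟩ : ∃ t, t = l.foldr max 0 := ⟨_, rfl⟩
  obtain ⟨α, hαdef⟩ : ∃ t, t = l.takeWhile (· ≠ m) := ⟨_, rfl⟩
  obtain ⟨β, hβdef⟩ : ∃ t, t = (l.dropWhile (· ≠ m)).tail := ⟨_, rfl⟩
  obtain ⟨a, hadef⟩ : ∃ t, t = α.length := ⟨_, rfl⟩
  obtain ⟨b, hbdef⟩ : ∃ t, t = β.length := ⟨_, rfl⟩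
  have hd : l = α ++ m :: β := by
    rw [hαdef, hβdef, hmdef]; exact decomp l hlne
  have hab : a + 1 + b = n := by
    have := congrArg List.length hd
    simp only [List.length_append, List.length_cons] at this
    omega
  have hnodup : l.Nodup := hperm.nodup_iff.2 (List.nodup_range' (s := 1) (n := n))
  have hmem : m ∈ l := by rw [hmdef]; exact foldr_max_mem l hlne
  have hm_le : ∀ y ∈ l, y ≤ m := by rw [hmdef]; exact le_foldr_max l
  have hbound : ∀ y ∈ l, 1 ≤ y ∧ y ≤ n := by
    intro y hy
    have := hperm.subset hy
    rw [List.mem_range'_1] at this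
    omega
  have hm_n : m = n := by
    have h1 := hbound m hmem
    have h2 : n ∈ l := by
      rw [hperm.mem_iff, List.mem_range'_1]
      omega
    have := hm_le n h2
    omega
  have hndd : (α ++ m :: β).Nodup := hd ▸ hnodup
  rw [List.nodup_append] at hndd
  obtain ⟨hαnd, hmβnd, hdisj⟩ := hndd
  rw [List.nodup_cons] at hmβnd
  obtain ⟨hmβ, hβnd⟩ := hmβnd
  have hαsub : ∀ x ∈ α, x ∈ l := fun x hx => hd ▸ List.mem_append_left _ hx
  have hβsub : ∀ y ∈ β, y ∈ l := fun y hy =>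
    hd ▸ List.mem_append_right _ (List.mem_cons_of_mem _ hy)
  have hαne : ∀ x ∈ α, x ≠ m := by
    intro x hx
    rw [hαdef] at hx
    have := List.mem_takeWhile_imp hx
    simpa using this
  have hαm : ∀ x ∈ α, x < m := by
    intro x hx
    have h1 := hm_le x (hαsub x hx)
    have h2 := hαne x hx
    omega
  have hβm : ∀ y ∈ β, y < m := by
    intro y hy
    have h1 := hm_le y (hβsub y hy)
    have h2 : y ≠ m := fun hc => hmβ (hc ▸ hy)
    omega
  have hαβ : ∀ x ∈ α, ∀ y ∈ β, x < y := by
    intro x hx y hy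
    have hxy : x ≠ y := by
      intro hc
      exact hdisj x hx x (List.mem_cons_of_mem _ (hc ▸ hy)) rfl
    rcases List.getElem_of_mem hx with ⟨i, hi, hxi⟩
    rcases List.getElem_of_mem hy with ⟨k, hk, hyk⟩
    by_contra hcon
    push_neg at hcon
    have hiA : i < a := by omega
    apply havoid
    refine ⟨i, a, a + 1 + k, by omega, by omega, by rw [hlen]; omega, ?_, ?_⟩
    · rw [hd, List.getD_append_right _ _ _ _ (by omega : α.length ≤ a + 1 + k)]
      have harith : a + 1 + k - α.length = k + 1 := by omega
      rw [harith, List.getD_cons_succ,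
        List.getD_append _ _ _ _ (by omega : i < α.length),
        List.getD_eq_getElem _ _ hk,
        List.getD_eq_getElem _ _ (by omega : i < α.length), hxi, hyk]
      omega
    · rw [hd, List.getD_append _ _ _ _ (by omega),
        List.getD_append_right _ _ _ _ (by omega : α.length ≤ a),
        List.getD_eq_getElem _ _ (by omega : i < α.length)]
      have harith : a - α.length = 0 := by omega
      rw [harith]
      simp only [List.getD_cons_zero]
      rw [hxi]
      exact hαm x hx
  have hβa : ∀ y ∈ β, a < y := by
    intro y hy
    by_contra hcon
    push_neg at hcon
    have hsub : α.toFinset ⊆ Finset.Ico 1 y := by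
      intro x hx
      rw [List.mem_toFinset] at hx
      rw [Finset.mem_Ico]
      exact ⟨(hbound x (hαsub x hx)).1, hαβ x hx y hy⟩
    have hcard := Finset.card_le_card hsub
    rw [List.toFinset_card_of_nodup hαnd, Nat.card_Ico] at hcard
    have := (hbound y (hβsub y hy)).1
    omega
  have hαa : ∀ x ∈ α, x ≤ a := by
    intro x hx
    have hsub : β.toFinset ⊆ Finset.Ioc x (a + b) := by
      intro y hy
      rw [List.mem_toFinset] at hy
      rw [Finset.mem_Ioc]
      have h1 := (hbound y (hβsub y hy)).2
      have h2 : y ≠ m := fun hc => hmβ (hc ▸ hy)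
      exact ⟨hαβ x hx y hy, by omega⟩
    have hcard := Finset.card_le_card hsub
    rw [List.toFinset_card_of_nodup hβnd, Nat.card_Ioc] at hcard
    have h3 := (hbound x (hαsub x hx)).2
    have h4 := hαne x hx
    omega
  have hα1 : ∀ x ∈ α, 1 ≤ x := fun x hx => (hbound x (hαsub x hx)).1
  have hβab : ∀ y ∈ β, y ≤ a + b := by
    intro y hy
    have h1 := (hbound y (hβsub y hy)).2
    have h2 : y ≠ m := fun hc => hmβ (hc ▸ hy)
    omega
  have hrngnd : ∀ s t : ℕ, (List.range' s t).Nodup := fun s t => List.nodup_range' (s := s) (n := t)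
  have hαperm : α.Perm (List.range' 1 a) := by
    apply List.perm_of_nodup_nodup_toFinset_eq hαnd (hrngnd 1 a)
    apply Finset.eq_of_subset_of_card_le
    · intro x hx
      rw [List.mem_toFinset] at hx ⊢
      rw [List.mem_range'_1]
      exact ⟨hα1 x hx, by have := hαa x hx; omega⟩
    · rw [List.toFinset_card_of_nodup hαnd, List.toFinset_card_of_nodup (hrngnd 1 a),
        List.length_range']
      omega
  have hβperm : β.Perm (List.range' (a + 1) b) := by
    apply List.perm_of_nodup_nodup_toFinset_eq hβnd (hrngnd (a + 1) b)
    apply Finset.eq_of_subset_of_card_le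
    · intro y hy
      rw [List.mem_toFinset] at hy ⊢
      rw [List.mem_range'_1]
      exact ⟨by have := hβa y hy; omega, by have := hβab y hy; omega⟩
    · rw [List.toFinset_card_of_nodup hβnd, List.toFinset_card_of_nodup (hrngnd (a + 1) b),
        List.length_range']
      omega
  have hrange_sub : (List.range' (a + 1) b).map (· - a) = List.range' 1 b := by
    have h1 : List.range' (a + 1) b = (List.range' 1 b).map (a + ·) :=
      (List.map_add_range' (a := a) 1 b 1).symm
    rw [h1, List.map_map]
    have h2 : ((· - a) ∘ (a + ·)) = (id : ℕ → ℕ) := by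
      funext z; simp
    rw [h2, List.map_id]
  have hβ'perm : (β.map (· - a)).Perm (List.range' 1 b) := by
    rw [← hrange_sub]
    exact hβperm.map _
  have hα231 : Avoids231 α := by
    rintro ⟨i, j, k, hij, hjk, hk, h1, h2⟩
    apply havoid
    have hgd : ∀ t : ℕ, t < α.length → l.getD t 0 = α.getD t 0 := by
      intro t ht
      rw [hd, List.getD_append _ _ _ _ (by omega)]
    refine ⟨i, j, k, hij, hjk, by rw [hlen]; omega, ?_, ?_⟩
    · rw [hgd i (by omega), hgd k (by omega)]; exact h1
    · rw [hgd i (by omega), hgd j (by omega)]; exact h2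
  have hβgd : ∀ t : ℕ, t < b → l.getD (a + 1 + t) 0 = β.getD t 0 := by
    intro t ht
    rw [hd, List.getD_append_right _ _ _ _ (by omega)]
    have harith : a + 1 + t - α.length = t + 1 := by omega
    rw [harith, List.getD_cons_succ]
  have hβ'gd : ∀ t : ℕ, t < b → (β.map (· - a)).getD t 0 = β.getD t 0 - a := by
    intro t ht
    rw [List.getD_eq_getElem _ _ (by simpa using (by omega : t < β.length)), List.getElem_map,
      List.getD_eq_getElem _ _ (by omega : t < β.length)]
  have hβmem : ∀ t : ℕ, t < b → β.getD t 0 ∈ β := by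
    intro t ht
    rw [List.getD_eq_getElem _ _ (by omega : t < β.length)]
    exact List.getElem_mem _
  have hβ'231 : Avoids231 (β.map (· - a)) := by
    rintro ⟨i, j, k, hij, hjk, hk, h1, h2⟩
    rw [List.length_map] at hk
    rw [hβ'gd i (by omega), hβ'gd k (by omega)] at h1
    rw [hβ'gd i (by omega), hβ'gd j (by omega)] at h2
    have hbi := hβa _ (hβmem i (by omega))
    have hbj := hβa _ (hβmem j (by omega))
    have hbk := hβa _ (hβmem k (by omega))
    apply havoid
    refine ⟨a + 1 + i, a + 1 + j, a + 1 + k, by omega, by omega, by rw [hlen]; omega, ?_, ?_⟩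
    · rw [hβgd i (by omega), hβgd k (by omega)]; omega
    · rw [hβgd i (by omega), hβgd j (by omega)]; omega
  obtain ⟨hPαperm, hPαud⟩ := IH a (by omega) α hadef.symm hαperm hα231
  obtain ⟨hPβperm, hPβud⟩ := IH b (by omega) (β.map (· - a))
    (by rw [List.length_map]; omega) hβ'perm hβ'231
  have hPl : Pperm l = (Pperm α).map (· + b) ++ m :: Pperm (β.map (· - a)) := by
    have h0 := pperm_unfold l hlne
    rw [← hmdef, ← hαdef, ← hβdef, ← hadef, ← hbdef] at h0
    exact h0
  have hmapA : (List.range' 1 a).map (· + b) = List.range' (b + 1) a := by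
    rw [← List.map_add_range' (a := b) 1 a 1]
    exact List.map_congr_left fun x _ => Nat.add_comm x b
  have hAperm : ((Pperm α).map (· + b)).Perm (List.range' (b + 1) a) := by
    rw [← hmapA]
    exact hPαperm.map _
  constructor
  · rw [hPl]
    have step1 : ((Pperm α).map (· + b) ++ m :: Pperm (β.map (· - a))).Perm
        (List.range' (b + 1) a ++ m :: List.range' 1 b) :=
      hAperm.append (hPβperm.cons m)
    apply step1.trans
    have step2 : (List.range' (b + 1) a ++ m :: List.range' 1 b).Perm
        (m :: (List.range' (b + 1) a ++ List.range' 1 b)) := List.perm_middle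
    apply step2.trans
    have step3 : (List.range' (b + 1) a ++ List.range' 1 b).Perm
        (List.range' 1 b ++ List.range' (b + 1) a) := List.perm_append_comm
    apply (step3.cons m).trans
    have hr1 : List.range' 1 b ++ List.range' (b + 1) a = List.range' 1 (a + b) := by
      have h5 := List.range'_append (s := 1) (m := b) (n := a) (step := 1)
      simp only [one_mul] at h5
      rw [show b + 1 = 1 + b by omega, h5, Nat.add_comm b a]
    rw [hr1]
    have hr2 : List.range' 1 n = List.range' 1 (a + b) ++ [m] := by
      have h5 := List.range'_append (s := 1) (m := a + b) (n := 1) (step := 1)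
      simp only [one_mul, List.range'_one] at h5
      rw [show m = 1 + (a + b) by omega, show n = a + b + 1 by omega]
      exact h5.symm
    rw [hr2]
    exact (List.perm_append_singleton m (List.range' 1 (a + b))).symm
  · rw [hPl]
    conv_rhs => rw [hd]
    have hAlen : ((Pperm α).map (· + b)).length = α.length := by
      rw [List.length_map, hPαperm.length_eq, List.length_range']
      omega
    have hBlen : (Pperm (β.map (· - a))).length = β.length := by
      rw [hPβperm.length_eq, List.length_range']
      omega
    apply updown_sandwich hAlen hBlen
    · rw [updown_map _ _ (by intro x _ y _; show x + b < y + b ↔ x < y; omega), hPαud]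
    · rw [hPβud]
      exact updown_map (· - a) β (by
        intro x hx y hy
        show x - a < y - a ↔ x < y
        have := hβa x hx
        have := hβa y hy
        omega)
    · intro x hx
      have := hAperm.subset hx
      rw [List.mem_range'_1] at this
      omega
    · exact hαm
    · intro x hx
      have := hPβperm.subset hx
      rw [List.mem_range'_1] at this
      omega
    · exact hβm

theorem pperm_length (l : List ℕ) (hperm : l.Perm (List.range' 1 l.length))
    (havoid : Avoids231 l) : (Pperm l).length = l.length := by
  have := (pperm_main l.length l rfl hperm havoid).1
  rw [this.length_eq, List.length_range']

end PpermProof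

/-- `P` preserves the up-down word, in particular the descent set. -/
theorem Pperm_preserves_updown :
    ∀ π : List ℕ, π.Perm (List.range' 1 π.length) → Avoids231 π →
      updown (Pperm π) = updown π ∧
      {i | i + 1 < π.length ∧ π.getD (i + 1) 0 < π.getD i 0} =
        {i | i + 1 < (Pperm π).length ∧
          (Pperm π).getD (i + 1) 0 < (Pperm π).getD i 0} := by
  intro π hperm havoid
  obtain ⟨hPperm, hud⟩ := pperm_main π.length π rfl hperm havoid
  refine ⟨hud, ?_⟩
  have hlen : (Pperm π).length = π.length := by
    rw [hPperm.length_eq, List.length_range']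
  have hnd : π.Nodup := hperm.nodup_iff.2 (List.nodup_range' (s := 1) (n := π.length))
  have hnd' : (Pperm π).Nodup := hPperm.nodup_iff.2 (List.nodup_range' (s := 1) (n := π.length))
  ext i
  simp only [Set.mem_setOf_eq, hlen]
  constructor
  · rintro ⟨h1, h2⟩
    refine ⟨h1, ?_⟩
    have hud' := congrArg (fun w => w.getD i false) hud
    rw [updown_getD _ _ (by omega : i + 1 < (Pperm π).length),
      updown_getD _ _ (by omega : i + 1 < π.length)] at hud'
    have hne : (Pperm π).getD i 0 ≠ (Pperm π).getD (i + 1) 0 := by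
      rw [List.getD_eq_getElem (Pperm π) 0 (n := i) (by omega),
        List.getD_eq_getElem (Pperm π) 0 (n := i + 1) (by omega)]
      intro hc
      have := List.Nodup.get_inj_iff hnd' (i := ⟨i, by omega⟩) (j := ⟨i + 1, by omega⟩)
      simp only [List.get_eq_getElem] at this
      have := this.1 hc
      simp at this
    have hlt : ¬ (π.getD i 0 < π.getD (i + 1) 0) := by omega
    simp only [decide_eq_decide] at hud'
    have := fun h => hlt (hud'.1 h)
    omega
  · rintro ⟨h1, h2⟩
    refine ⟨h1, ?_⟩
    have hud' := congrArg (fun w => w.getD i false) hud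
    rw [updown_getD _ _ (by omega : i + 1 < (Pperm π).length),
      updown_getD _ _ (by omega : i + 1 < π.length)] at hud'
    have hne : π.getD i 0 ≠ π.getD (i + 1) 0 := by
      rw [List.getD_eq_getElem π 0 (n := i) (by omega),
        List.getD_eq_getElem π 0 (n := i + 1) (by omega)]
      intro hc
      have := List.Nodup.get_inj_iff hnd (i := ⟨i, by omega⟩) (j := ⟨i + 1, by omega⟩)
      simp only [List.get_eq_getElem] at this
      have := this.1 hc
      simp at this
    have hlt : ¬ ((Pperm π).getD i 0 < (Pperm π).getD (i + 1) 0) := by omega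
    simp only [decide_eq_decide] at hud'
    have := fun h => hlt (hud'.2 h)
    omega
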